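/- Call x ∈ ℤ_{≥0}^{k+1} exceptional if all coordinates of x are odd, max_i x_i < m, and |x| = k·m + k − 1 for some even m (denoted m(x)). If x is exceptional then B(x) < m(x). -/
import Mathlib


/-- `z` is a basic position with parameter `b`: coordinate sum `k*b`, all coordinates
at most `b`, all coordinates even if `b` is even, exactly one even if `b` is odd. -/
def IsBasic (k : ℕ) (z : Fin (k+1) → ℕ) (b : ℕ) : Prop :=
  (∑ i, z i) = k * b ∧ (∀ i, z i ≤ b) ∧
    (Even b → ∀ i, Even (z i)) ∧ (Odd b → ∃! i, Even (z i))

/-- `Pre k y x` means `y ⪯ x`: the sorted vector of `y` is componentwise ≤ that of `x`. -/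
def Pre (k : ℕ) (y x : Fin (k+1) → ℕ) : Prop :=
  ∀ i, (y ∘ Tuple.sort y) i ≤ (x ∘ Tuple.sort x) i

/-- `BVal k x = max { b : some basic z with parameter b satisfies z ⪯ x }`. -/
noncomputable def BVal (k : ℕ) (x : Fin (k+1) → ℕ) : ℕ :=
  sSup {b | ∃ z, IsBasic k z b ∧ Pre k z x}

/-- A move in NIM(k+1,k): keep coordinate `i`, decrease every other (positive) coordinate by 1. -/
def MoveK (k : ℕ) (x y : Fin (k+1) → ℕ) : Prop :=
  ∃ i, (∀ j, j ≠ i → 0 < x j) ∧ ∀ j, y j = if j = i then x j else x j - 1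

/-- The M-move: keep a smallest even coordinate if one exists, otherwise keep a
largest coordinate; decrease the other k (positive) coordinates by 1. -/
def MMove (k : ℕ) (x y : Fin (k+1) → ℕ) : Prop :=
  ∃ i, (∀ j, j ≠ i → 0 < x j) ∧
    ((∃ j, Even (x j)) → Even (x i) ∧ ∀ j, Even (x j) → x i ≤ x j) ∧
    ((∀ j, Odd (x j)) → ∀ j, x j ≤ x i) ∧
    (∀ j, y j = if j = i then x j else x j - 1)

/-- Exceptional position: all coordinates odd, all `< m`, and `|x| = k*m + k - 1`
for some even `m`. -/
def Exceptional (k : ℕ) (x : Fin (k+1) → ℕ) : Prop :=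
  ∃ m, Even m ∧ (∀ i, Odd (x i)) ∧ (∀ i, x i < m) ∧ (∑ i, x i) = k * m + k - 1

/-- `MVal k x m`: playing the M-rule from `x`, the game ends after exactly `m` moves. -/
inductive MVal (k : ℕ) : (Fin (k+1) → ℕ) → ℕ → Prop
  | zero (x) : (¬ ∃ y, MoveK k x y) → MVal k x 0
  | succ (x y m) : MMove k x y → MVal k y m → MVal k x (m + 1)

theorem stmt11 (k : ℕ) (hk : 2 ≤ k) (x : Fin (k+1) → ℕ) (m : ℕ)
    (hm : Even m) (hodd : ∀ i, Odd (x i)) (hlt : ∀ i, x i < m)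
    (hsum : (∑ i, x i) = k * m + k - 1) : BVal k x < m := by
  have hm2 : 2 ≤ m := by
    have h0 := (hodd 0).pos
    have := hlt 0
    have h1 := hodd 0
    rcases h1 with ⟨c, hc⟩
    omega
  have key : ∀ b ∈ {b | ∃ z, IsBasic k z b ∧ Pre k z x}, b < m := by
    rintro b ⟨z, ⟨hsz, hle, hev, hodd'⟩, hpre⟩
    have hzx : (∑ i, z i) ≤ ∑ i, x i := by
      rw [← Equiv.sum_comp (Tuple.sort z) z, ← Equiv.sum_comp (Tuple.sort x) x]
      exact Finset.sum_le_sum fun i _ => hpre i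
    have hbm : b ≤ m := by
      rw [hsz, hsum] at hzx
      by_contra h
      have h1 : k * (m + 1) ≤ k * b := Nat.mul_le_mul_left k (by omega)
      have h3 : k * m + k ≤ k * m + k - 1 := by
        calc k * m + k = k * (m + 1) := by ring
        _ ≤ k * b := h1
        _ ≤ k * m + k - 1 := hzx
      have hpos : 0 < k * m + k := by
        have hk0 : 0 < k := by omega
        positivity
      exact absurd (lt_of_le_of_lt h3 (Nat.sub_lt hpos one_pos)) (lt_irrefl _)
    rcases lt_or_eq_of_le hbm with h | rfl
    · exact h
    · exfalso
      have hallz : ∀ i, Even (z i) := hev hm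
      have hstrict : ∀ i, (z ∘ Tuple.sort z) i + 1 ≤ (x ∘ Tuple.sort x) i := by
        intro i
        have h1 := hpre i
        have h2 : Even ((z ∘ Tuple.sort z) i) := hallz _
        have h3 : Odd ((x ∘ Tuple.sort x) i) := hodd _
        have : (z ∘ Tuple.sort z) i ≠ (x ∘ Tuple.sort x) i := by
          intro h; rw [h] at h2; exact (Nat.not_even_iff_odd.mpr h3) h2
        omega
      have hsum2 : (∑ i, ((z ∘ Tuple.sort z) i + 1)) ≤ ∑ i, (x ∘ Tuple.sort x) i :=
        Finset.sum_le_sum fun i _ => hstrict i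
      rw [Finset.sum_add_distrib, Finset.sum_const, Finset.card_univ] at hsum2
      have e1 : (∑ i, (z ∘ Tuple.sort z) i) = ∑ i, z i := Equiv.sum_comp (Tuple.sort z) z
      have e2 : (∑ i, (x ∘ Tuple.sort x) i) = ∑ i, x i := Equiv.sum_comp (Tuple.sort x) x
      rw [e1, e2, hsz, hsum] at hsum2
      simp only [Fintype.card_fin, smul_eq_mul, mul_one] at hsum2
      omega
  rcases Set.eq_empty_or_nonempty {b | ∃ z, IsBasic k z b ∧ Pre k z x} with he | hne
  · rw [BVal, he, csSup_empty]
    exact lt_of_lt_of_le (by norm_num) hm2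
  · have : BVal k x ≤ m - 1 := csSup_le hne fun b hb => by
      have := key b hb; omega
    omega
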